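/- arXiv:2410.12306 — 2 statements merged into one kernel-verified Lean document; each statement's English description precedes it below -/
import Mathlib

section
/- Fix an integer n ≥ 2, an integer K ≥ 1, and a real Δc > 0. Let vm^(1) < ⋯ < vm^(K) be reals and set vM^(k) = vm^(k) + Δc for each k. Let (vm(t), vM(t)) be a piecewise-constant function of t ∈ [0,∞) taking values in {(vm^(k), vM^(k)) : 1 ≤ k ≤ K}, with finitely many switching times in each bounded interval, and let x : [0,∞) → ℝ be continuous, differentiable at every non-switching time, with x'(t) = −(1/(n(n−1)))·(x(t) − vm(t))/Δc there, and x(0) ∈ [vm^(1), vm^(K)]. Then lim_{T→∞} (1/T)·∫_0^T (vM(t) − vm(t))·x'(t) dt = 0; consequently the time-averaged expected payoff of each bidder in the first-price auction equals that in the second-price auction. -/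
open MeasureTheory Filter

/-- Revenue equivalence under fixed interval width `Δc`: when all states share the
same width `vM^(k) - vm^(k) = Δc`, the time average
`(1/T) ∫_0^T (vM(t) - vm(t)) x'(t) dt → 0`, so the time-averaged first-price and
second-price payoffs coincide. -/
theorem revenue_equivalence_fixed_width (n K : ℕ) (hn : 2 ≤ n) (hK : 1 ≤ K)
    (Dc : ℝ) (hDc : 0 < Dc)
    (vmk : ℕ → ℝ)
    (hmono : ∀ k, k + 1 < K → vmk k < vmk (k + 1))
    (vm vM : ℝ → ℝ)
    (hstate : ∀ t, 0 ≤ t → ∃ k < K, vm t = vmk k ∧ vM t = vmk k + Dc)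
    (S : Set ℝ)
    (hSfin : ∀ T : ℝ, (S ∩ Set.Icc 0 T).Finite)
    (hpc : ∀ t, 0 ≤ t → t ∉ S → ∀ᶠ s in nhds t, vm s = vm t ∧ vM s = vM t)
    (x xd : ℝ → ℝ)
    (hx : ContinuousOn x (Set.Ici 0))
    (hode : ∀ t, 0 ≤ t → t ∉ S → HasDerivAt x (xd t) t)
    (hform : ∀ t, 0 ≤ t → t ∉ S →
      xd t = -(1 / ((n : ℝ) * ((n : ℝ) - 1))) * ((x t - vm t) / Dc))
    (hx0 : x 0 ∈ Set.Icc (vmk 0) (vmk (K - 1))) :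
    Tendsto (fun T : ℝ => T⁻¹ * ∫ t in (0:ℝ)..T, (vM t - vm t) * xd t) atTop (nhds 0)
    ∧ Tendsto (fun T : ℝ =>
        T⁻¹ * ∫ t in (0:ℝ)..T, ((n : ℝ) - 1) / (n : ℝ) * ((vM t - vm t) * xd t))
        atTop (nhds 0) := by
  -- basic constants
  have hn2 : (2 : ℝ) ≤ (n : ℝ) := by exact_mod_cast hn
  have hnn : (0 : ℝ) < (n : ℝ) * ((n : ℝ) - 1) := by nlinarith
  set L : ℝ := 1 / ((n : ℝ) * ((n : ℝ) - 1) * Dc) with hLdef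
  have hL : 0 < L := by
    apply div_pos one_pos (mul_pos hnn hDc)
  have hxd : ∀ t, 0 ≤ t → t ∉ S → xd t = -L * (x t - vm t) := by
    intro t ht hts
    rw [hform t ht hts, hLdef]
    field_simp
  -- bound on vm
  have hKr : (Finset.range K).Nonempty := ⟨0, Finset.mem_range.2 (by omega)⟩
  set M : ℝ := (Finset.range K).sup' hKr (fun k => |vmk k|) with hMdef
  have hvmM : ∀ t, 0 ≤ t → |vm t| ≤ M := by
    intro t ht
    obtain ⟨k, hk, h1, _⟩ := hstate t ht
    rw [h1]
    exact Finset.le_sup' (fun k => |vmk k|) (Finset.mem_range.2 hk)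
  have hM0 : 0 ≤ M := le_trans (abs_nonneg _) (hvmM 0 le_rfl)
  have hwidth : ∀ t, 0 ≤ t → vM t - vm t = Dc := by
    intro t ht
    obtain ⟨k, hk, h1, h2⟩ := hstate t ht
    rw [h1, h2]; ring
  -- per-T measure-theoretic setup
  have key : ∀ T : ℝ, 0 ≤ T →
      (∫ t in (0:ℝ)..T, xd t) = x T - x 0 ∧ |x T| ≤ |x 0| + M := by
    intro T hT
    set sfin : Set ℝ := S ∩ Set.Icc 0 T with hsdef
    have hsf : sfin.Finite := hSfin T
    have hnull : volume sfin = 0 := hsf.measure_zero _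
    have hsub : Set.Ioc (0:ℝ) T \ sfin = Set.Ioc (0:ℝ) T \ S := by
      ext t
      simp only [Set.mem_diff, Set.mem_Ioc, hsdef, Set.mem_inter_iff, Set.mem_Icc]
      constructor
      · rintro ⟨⟨h1, h2⟩, h3⟩
        exact ⟨⟨h1, h2⟩, fun hS => h3 ⟨hS, h1.le, h2⟩⟩
      · rintro ⟨⟨h1, h2⟩, h3⟩
        exact ⟨⟨h1, h2⟩, fun hS => h3 hS.1⟩
    have hres : volume.restrict (Set.Ioc (0:ℝ) T) =
        volume.restrict (Set.Ioc (0:ℝ) T \ sfin) := by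
      refine (Measure.restrict_congr_set ?_).symm
      exact diff_ae_eq_self.2 (measure_mono_null Set.inter_subset_right hnull)
    have hmeasA : MeasurableSet (Set.Ioc (0:ℝ) T \ sfin) :=
      measurableSet_Ioc.diff hsf.measurableSet
    have hvm_cont : ContinuousOn vm (Set.Ioc (0:ℝ) T \ sfin) := by
      rw [hsub]
      intro t ht
      have h1 : (0:ℝ) ≤ t := ht.1.1.le
      have h2 : t ∉ S := ht.2
      have := (hpc t h1 h2).mono (fun s hs => hs.1)
      exact (Filter.EventuallyEq.continuousAt (y := vm t) this).continuousWithinAt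
    have hvm_aesm : AEStronglyMeasurable vm (volume.restrict (Set.Ioc (0:ℝ) T)) := by
      rw [hres]
      exact hvm_cont.aestronglyMeasurable hmeasA
    have hx_aesm : AEStronglyMeasurable x (volume.restrict (Set.Ioc (0:ℝ) T)) :=
      (hx.mono (fun t ht => ht.1.le)).aestronglyMeasurable measurableSet_Ioc
    -- integrability helper
    have hintOf : ∀ (f : ℝ → ℝ) (C : ℝ),
        AEStronglyMeasurable f (volume.restrict (Set.Ioc (0:ℝ) T)) →
        (∀ t ∈ Set.Ioc (0:ℝ) T, ‖f t‖ ≤ C) →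
        IntervalIntegrable f volume 0 T := by
      intro f C hmeas hbd
      rw [intervalIntegrable_iff_integrableOn_Ioc_of_le hT]
      refine Integrable.mono' (integrable_const C) hmeas ?_
      exact (ae_restrict_mem measurableSet_Ioc).mono hbd
    -- the auxiliary function g = exp(Lt) x t
    set g : ℝ → ℝ := fun t => Real.exp (L * t) * x t with hgdef
    set gd : ℝ → ℝ := fun t => Real.exp (L * t) * L * vm t with hgddef
    have hexp_cont : Continuous fun t : ℝ => Real.exp (L * t) :=
      Real.continuous_exp.comp (continuous_const.mul continuous_id)
    have hexp_deriv : ∀ t : ℝ, HasDerivAt (fun s => Real.exp (L * s))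
        (Real.exp (L * t) * L) t := by
      intro t
      simpa using ((hasDerivAt_id t).const_mul L).exp
    have hb : ∀ t, 0 ≤ t → t ≤ T →
        Real.exp (L * t) * L * |vm t| ≤ Real.exp (L * T) * L * M := by
      intro t h0 hTt
      have h1 : Real.exp (L * t) ≤ Real.exp (L * T) :=
        Real.exp_le_exp.2 (mul_le_mul_of_nonneg_left hTt hL.le)
      have h2 := hvmM t h0
      calc Real.exp (L * t) * L * |vm t| ≤ Real.exp (L * t) * L * M :=
            mul_le_mul_of_nonneg_left h2 (by positivity)
        _ ≤ Real.exp (L * T) * L * M :=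
            mul_le_mul_of_nonneg_right (mul_le_mul_of_nonneg_right h1 hL.le) hM0
    have hgderiv : ∀ t ∈ Set.Ioo (0:ℝ) T \ sfin, HasDerivAt g (gd t) t := by
      intro t ht
      have h0 : (0:ℝ) ≤ t := ht.1.1.le
      have hts : t ∉ S := fun hS => ht.2 ⟨hS, h0, ht.1.2.le⟩
      have hd := (hexp_deriv t).mul (hode t h0 hts)
      have : Real.exp (L * t) * L * x t + Real.exp (L * t) * xd t = gd t := by
        rw [hxd t h0 hts, hgddef]; ring
      rw [← this]
      exact hd
    have hgd_int : IntervalIntegrable gd volume 0 T := by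
      refine hintOf gd (Real.exp (L * T) * L * M) ?_ ?_
      · exact ((hexp_cont.aestronglyMeasurable.restrict.mul
          aestronglyMeasurable_const)).mul hvm_aesm
      · intro t ht
        have h3 := Real.exp_pos (L * t)
        show ‖Real.exp (L * t) * L * vm t‖ ≤ _
        rw [Real.norm_eq_abs, abs_mul, abs_mul, abs_of_pos h3, abs_of_pos hL]
        exact hb t ht.1.le ht.2
    have hg_cont : ContinuousOn g (Set.Icc (0:ℝ) T) :=
      (hexp_cont.continuousOn).mul (hx.mono (fun t ht => ht.1))
    have hftc_g : (∫ t in (0:ℝ)..T, gd t) = g T - g 0 :=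
      integral_eq_of_hasDerivAt_off_countable_of_le g gd hT hsf.countable
        hg_cont hgderiv hgd_int
    -- compare with the explicit integral of exp
    have hexp_int : (∫ t in (0:ℝ)..T, Real.exp (L * t) * L * M)
        = M * (Real.exp (L * T) - 1) := by
      have h1 : (∫ t in (0:ℝ)..T, Real.exp (L * t) * L)
          = Real.exp (L * T) - Real.exp (L * 0) := by
        apply intervalIntegral.integral_eq_sub_of_hasDerivAt
        · intro t _
          exact hexp_deriv t
        · exact ((hexp_cont.mul continuous_const).intervalIntegrable 0 T)
      rw [intervalIntegral.integral_mul_const, h1]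
      simp [mul_comm]
    have hE1 : (1:ℝ) ≤ Real.exp (L * T) := Real.one_le_exp (by positivity)
    have hφpos : 0 ≤ M * (Real.exp (L * T) - 1) := by nlinarith
    have hgd_bound : |g T - g 0| ≤ M * (Real.exp (L * T) - 1) := by
      rw [← hftc_g]
      have h := intervalIntegral.norm_integral_le_abs_of_norm_le
        (f := gd) (μ := volume) (a := 0) (b := T)
        (g := fun t => Real.exp (L * t) * L * M) ?_ ?_
      · rw [Real.norm_eq_abs] at h
        refine h.trans ?_
        rw [hexp_int, abs_of_nonneg hφpos]
      · rw [Set.uIoc_of_le hT]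
        refine (ae_restrict_mem measurableSet_Ioc).mono ?_
        intro t ht
        have h3 := Real.exp_pos (L * t)
        show ‖Real.exp (L * t) * L * vm t‖ ≤ _
        rw [Real.norm_eq_abs, abs_mul, abs_mul, abs_of_pos h3, abs_of_pos hL]
        have := hb t ht.1.le ht.2
        have h1 : Real.exp (L * t) ≤ Real.exp (L * T) :=
          Real.exp_le_exp.2 (mul_le_mul_of_nonneg_left ht.2 hL.le)
        show _ ≤ Real.exp (L * t) * L * M
        exact mul_le_mul_of_nonneg_left (hvmM t ht.1.le) (by positivity)
      · exact ((hexp_cont.mul continuous_const).mul continuous_const).intervalIntegrable 0 T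
    -- the bound |x T| ≤ |x 0| + M
    have hxbound : |x T| ≤ |x 0| + M := by
      have hE : (1:ℝ) ≤ Real.exp (L * T) := Real.one_le_exp (by positivity)
      have hEpos : (0:ℝ) < Real.exp (L * T) := Real.exp_pos _
      have hg0 : g 0 = x 0 := by simp [hgdef]
      have hgT : g T = Real.exp (L * T) * x T := rfl
      rw [hg0, hgT] at hgd_bound
      have h1 : Real.exp (L * T) * |x T| ≤ |x 0| + M * (Real.exp (L * T) - 1) := by
        have := abs_sub_abs_le_abs_sub (Real.exp (L * T) * x T) (x 0)
        rw [abs_mul, abs_of_pos hEpos] at this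
        linarith [hgd_bound, this]
      nlinarith [abs_nonneg (x T), abs_nonneg (x 0)]
    -- integrability of xd and FTC
    have hxT_cont := hx.mono (fun t (ht : t ∈ Set.Icc (0:ℝ) T) => ht.1)
    have hBx : ∃ B, ∀ t ∈ Set.Icc (0:ℝ) T, |x t| ≤ B := by
      rcases (isCompact_Icc.image_of_continuousOn hxT_cont).isBounded.subset_closedBall 0
        with ⟨r, hr⟩
      exact ⟨r, fun t ht => by
        have := hr ⟨t, ht, rfl⟩
        simpa [Metric.mem_closedBall, Real.dist_eq] using this⟩
    obtain ⟨B, hB⟩ := hBx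
    have hf1_int : IntervalIntegrable (fun t => -L * (x t - vm t)) volume 0 T := by
      refine hintOf _ (L * (B + M)) ?_ ?_
      · exact (aestronglyMeasurable_const.mul (hx_aesm.sub hvm_aesm))
      · intro t ht
        have h1 := hB t ⟨ht.1.le, ht.2⟩
        have h2 := hvmM t ht.1.le
        rw [Real.norm_eq_abs, abs_mul, abs_neg, abs_of_pos hL]
        have : |x t - vm t| ≤ B + M := (abs_sub _ _).trans (by linarith)
        nlinarith [abs_nonneg (x t - vm t)]
    have hxd_int : IntervalIntegrable xd volume 0 T := by
      rw [intervalIntegrable_iff_integrableOn_Ioc_of_le hT]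
      rw [intervalIntegrable_iff_integrableOn_Ioc_of_le hT] at hf1_int
      refine hf1_int.congr ?_
      rw [hres]
      refine (ae_restrict_mem hmeasA).mono ?_
      intro t ht
      rw [hsub] at ht
      exact (hxd t ht.1.1.le ht.2).symm
    have hftc : (∫ t in (0:ℝ)..T, xd t) = x T - x 0 :=
      integral_eq_of_hasDerivAt_off_countable_of_le x xd hT hsf.countable
        hxT_cont
        (fun t ht => hode t ht.1.1.le (fun hS => ht.2 ⟨hS, ht.1.1.le, ht.1.2.le⟩))
        hxd_int
    exact ⟨hftc, hxbound⟩
  -- rewrite the main integral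
  have hval : ∀ T : ℝ, 0 ≤ T →
      (∫ t in (0:ℝ)..T, (vM t - vm t) * xd t) = Dc * (x T - x 0) := by
    intro T hT
    have h1 : (∫ t in (0:ℝ)..T, (vM t - vm t) * xd t) = ∫ t in (0:ℝ)..T, Dc * xd t := by
      apply intervalIntegral.integral_congr
      intro t ht
      rw [Set.uIcc_of_le hT] at ht
      show (vM t - vm t) * xd t = Dc * xd t
      rw [hwidth t ht.1]
    rw [h1, intervalIntegral.integral_const_mul, (key T hT).1]
  -- the first limit
  have hC : 0 ≤ Dc * (2 * |x 0| + M) := by positivity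
  have hlim1 : Tendsto (fun T : ℝ => T⁻¹ * ∫ t in (0:ℝ)..T, (vM t - vm t) * xd t)
      atTop (nhds 0) := by
    apply squeeze_zero_norm' (a := fun T : ℝ => Dc * (2 * |x 0| + M) * T⁻¹)
    · filter_upwards [eventually_ge_atTop (1:ℝ)] with T hT
      have hT0 : (0:ℝ) ≤ T := by linarith
      have hTpos : (0:ℝ) < T := by linarith
      rw [hval T hT0, Real.norm_eq_abs, abs_mul, abs_inv, abs_of_pos hTpos]
      rw [mul_comm (Dc * (2 * |x 0| + M)) T⁻¹]
      apply mul_le_mul_of_nonneg_left _ (inv_nonneg.2 hT0)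
      rw [abs_mul, abs_of_pos hDc]
      have h1 := (key T hT0).2
      have h2 : |x T - x 0| ≤ 2 * |x 0| + M := (abs_sub _ _).trans (by linarith)
      nlinarith
    · have := tendsto_inv_atTop_zero (𝕜 := ℝ)
      have h := this.const_mul (Dc * (2 * |x 0| + M))
      simpa using h
  refine ⟨hlim1, ?_⟩
  have heq : (fun T : ℝ => T⁻¹ * ∫ t in (0:ℝ)..T,
      ((n : ℝ) - 1) / (n : ℝ) * ((vM t - vm t) * xd t))
      = fun T : ℝ => ((n : ℝ) - 1) / (n : ℝ) *
        (T⁻¹ * ∫ t in (0:ℝ)..T, (vM t - vm t) * xd t) := by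
    funext T
    rw [intervalIntegral.integral_const_mul]
    ring
  rw [heq]
  have := hlim1.const_mul (((n : ℝ) - 1) / (n : ℝ))
  simpa using this
end

section
/- Fix an integer n ≥ 2 and two pairs of reals (vm^(1), vM^(1)), (vm^(2), vM^(2)) with vm^(1) < vM^(1), vm^(2) < vM^(2), and vm^(1) < vm^(2); write Δv^(k) = vM^(k) − vm^(k). Let (vm(t), vM(t)) be a piecewise-constant function of t ∈ [0,∞) taking values in {(vm^(1), vM^(1)), (vm^(2), vM^(2))}, with finitely many switching times in each bounded interval, and let x : [0,∞) → ℝ be continuous, differentiable at every non-switching time, with x'(t) = −(1/(n(n−1)))·(x(t) − vm(t))/(vM(t) − vm(t)) there, and x(0) ∈ [vm^(1), vm^(2)]. Then there exists a constant C ≥ 0, independent of T, such that for all T > 0: | ∫_0^T (vM(t) − vm(t))·x'(t) dt − (1/2)·(Δv^(2) − Δv^(1))·∫_0^T |x'(t)| dt | ≤ C. In particular, if lim_{T→∞} (1/T)·∫_0^T |x'(t)| dt = L exists, then lim_{T→∞} (1/T)·∫_0^T (vM(t) − vm(t))·x'(t) dt = (1/2)·(Δv^(2) − Δv^(1))·L,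 so the difference between the time-averaged first-price and second-price payoffs equals ((n−1)/n)·(1/2)·(Δv^(2) − Δv^(1))·L exactly. -/
open MeasureTheory Filter

/-- Exact two-state computation of the revenue difference: with two states
`(vm₁, vM₁)` and `(vm₂, vM₂)` (with `vm₁ < vm₂`), along the adaptive dynamics
`∫_0^T Δv(t) x'(t) dt` equals `(1/2)(Δv₂ - Δv₁) ∫_0^T |x'(t)| dt` up to a
constant `C` independent of `T`; hence if the time-average path length tends to
`L`, the time-averaged revenue difference tends to
`((n-1)/n)·(1/2)(Δv₂ - Δv₁)·L` exactly. -/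
theorem two_state_exact_revenue_difference (n : ℕ) (hn : 2 ≤ n)
    (vm1 vM1 vm2 vM2 : ℝ) (h1 : vm1 < vM1) (h2 : vm2 < vM2) (h12 : vm1 < vm2)
    (vm vM : ℝ → ℝ)
    (hstate : ∀ t, 0 ≤ t → (vm t = vm1 ∧ vM t = vM1) ∨ (vm t = vm2 ∧ vM t = vM2))
    (S : Set ℝ)
    (hSfin : ∀ T : ℝ, (S ∩ Set.Icc 0 T).Finite)
    (hpc : ∀ t, 0 ≤ t → t ∉ S → ∀ᶠ s in nhds t, vm s = vm t ∧ vM s = vM t)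
    (x xd : ℝ → ℝ)
    (hx : ContinuousOn x (Set.Ici 0))
    (hode : ∀ t, 0 ≤ t → t ∉ S → HasDerivAt x (xd t) t)
    (hform : ∀ t, 0 ≤ t → t ∉ S →
      xd t = -(1 / ((n : ℝ) * ((n : ℝ) - 1))) * ((x t - vm t) / (vM t - vm t)))
    (hx0 : x 0 ∈ Set.Icc vm1 vm2) :
    (∃ C, 0 ≤ C ∧ ∀ T > (0 : ℝ),
        abs ((∫ t in (0:ℝ)..T, (vM t - vm t) * xd t)
            - 1 / 2 * ((vM2 - vm2) - (vM1 - vm1)) * ∫ t in (0:ℝ)..T, |xd t|) ≤ C)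
    ∧ ∀ L : ℝ,
        Tendsto (fun T : ℝ => T⁻¹ * ∫ t in (0:ℝ)..T, |xd t|) atTop (nhds L) →
        Tendsto (fun T : ℝ => T⁻¹ * ∫ t in (0:ℝ)..T, (vM t - vm t) * xd t) atTop
            (nhds (1 / 2 * ((vM2 - vm2) - (vM1 - vm1)) * L))
          ∧ Tendsto (fun T : ℝ =>
              T⁻¹ * ∫ t in (0:ℝ)..T, ((n : ℝ) - 1) / (n : ℝ) * ((vM t - vm t) * xd t)) atTop
            (nhds (((n : ℝ) - 1) / (n : ℝ) * (1 / 2 * ((vM2 - vm2) - (vM1 - vm1)) * L))) := by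
  have hn2 : (2:ℝ) ≤ (n:ℝ) := by exact_mod_cast hn
  set c : ℝ := 1 / ((n : ℝ) * ((n : ℝ) - 1)) with hcdef
  have hc : 0 < c := by
    have : (0:ℝ) < (n : ℝ) * ((n : ℝ) - 1) := by nlinarith
    exact div_pos one_pos this
  have hd1p : (0:ℝ) < vM1 - vm1 := sub_pos.2 h1
  have hd2p : (0:ℝ) < vM2 - vm2 := sub_pos.2 h2
  -- countability of the nonnegative part of S
  have hScc : (S ∩ Set.Ici (0:ℝ)).Countable := by
    have hsub : S ∩ Set.Ici (0:ℝ) ⊆ ⋃ k : ℕ, S ∩ Set.Icc 0 (k:ℝ) := by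
      rintro t ⟨htS, ht0⟩
      obtain ⟨k, hk⟩ := exists_nat_ge t
      exact Set.mem_iUnion.2 ⟨k, htS, ht0, hk⟩
    exact Set.Countable.mono hsub (Set.countable_iUnion fun k => (hSfin k).countable)
  -- the measurable "state 1" set
  set V : Set ℝ := (interior {t | vm t = vm1} ∩ Set.Ioi 0) \ (S ∩ Set.Ici 0) with hVdef
  have hVmeas : MeasurableSet V :=
    ((isOpen_interior.inter isOpen_Ioi).measurableSet).diff hScc.measurableSet
  have hVmem : ∀ t, 0 < t → t ∉ S → (t ∈ V ↔ vm t = vm1) := by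
    intro t ht htS
    constructor
    · rintro ⟨⟨hti, _⟩, _⟩; exact (interior_subset hti : t ∈ {u | vm u = vm1})
    · intro hvm
      refine ⟨⟨?_, ht⟩, fun h => htS h.1⟩
      rw [mem_interior_iff_mem_nhds]
      exact Filter.eventually_mem_set.1 ((hpc t ht.le htS).mono fun s hs => hs.1.trans hvm)
  -- integrability of xd on [0, T]
  have hInt : ∀ T : ℝ, 0 < T → IntervalIntegrable xd volume 0 T := by
    intro T hT
    obtain ⟨M, hM⟩ := (isCompact_Icc (a := (0:ℝ)) (b := T)).exists_bound_of_continuousOn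
      (hx.mono Set.Icc_subset_Ici_self)
    have hM0 : 0 ≤ M := le_trans (norm_nonneg _) (hM 0 ⟨le_rfl, hT.le⟩)
    set g1 : ℝ → ℝ := fun t => -(c * ((x t - vm1) / (vM1 - vm1))) with hg1def
    set g2 : ℝ → ℝ := fun t => -(c * ((x t - vm2) / (vM2 - vm2))) with hg2def
    set g : ℝ → ℝ := fun t => V.indicator g1 t + Vᶜ.indicator g2 t with hgdef
    have hg1c : ContinuousOn g1 (Set.Ioc 0 T) := by
      apply ContinuousOn.neg
      exact (continuousOn_const.mul (((hx.mono (fun s hs => le_of_lt hs.1)).sub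
        continuousOn_const).div_const _))
    have hg2c : ContinuousOn g2 (Set.Ioc 0 T) := by
      apply ContinuousOn.neg
      exact (continuousOn_const.mul (((hx.mono (fun s hs => le_of_lt hs.1)).sub
        continuousOn_const).div_const _))
    have hgm : AEMeasurable g (volume.restrict (Set.Ioc 0 T)) := by
      refine AEMeasurable.add ?_ ?_
      · exact ((hg1c.aemeasurable measurableSet_Ioc).indicator hVmeas)
      · exact ((hg2c.aemeasurable measurableSet_Ioc).indicator hVmeas.compl)
    set B : ℝ := c * ((M + |vm1|) / (vM1 - vm1)) + c * ((M + |vm2|) / (vM2 - vm2)) with hBdef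
    have hgInt : Integrable g (volume.restrict (Set.Ioc 0 T)) := by
      have hBint : Integrable (fun _ : ℝ => B) (volume.restrict (Set.Ioc 0 T)) :=
        integrableOn_const measure_Ioc_lt_top.ne
      refine hBint.mono' hgm.aestronglyMeasurable ?_
      filter_upwards [ae_restrict_mem measurableSet_Ioc] with t ht
      have hxt : |x t| ≤ M := by
        have := hM t (Set.Ioc_subset_Icc_self ht)
        simpa [Real.norm_eq_abs] using this
      have hb1 : |g1 t| ≤ c * ((M + |vm1|) / (vM1 - vm1)) := by
        rw [hg1def]
        simp only
        rw [abs_neg, abs_mul, abs_of_pos hc, abs_div, abs_of_pos hd1p]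
        gcongr
        calc |x t - vm1| ≤ |x t| + |vm1| := abs_sub _ _
          _ ≤ M + |vm1| := by linarith
      have hb2 : |g2 t| ≤ c * ((M + |vm2|) / (vM2 - vm2)) := by
        rw [hg2def]
        simp only
        rw [abs_neg, abs_mul, abs_of_pos hc, abs_div, abs_of_pos hd2p]
        gcongr
        calc |x t - vm2| ≤ |x t| + |vm2| := abs_sub _ _
          _ ≤ M + |vm2| := by linarith
      have hp1 : 0 ≤ c * ((M + |vm1|) / (vM1 - vm1)) := le_trans (abs_nonneg _) hb1
      have hp2 : 0 ≤ c * ((M + |vm2|) / (vM2 - vm2)) := le_trans (abs_nonneg _) hb2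
      rw [Real.norm_eq_abs, hgdef]
      simp only
      by_cases htV : t ∈ V
      · rw [Set.indicator_of_mem htV, Set.indicator_of_notMem (by simpa using htV),
          add_zero, hBdef]
        linarith
      · rw [Set.indicator_of_notMem htV, Set.indicator_of_mem (by simpa using htV),
          zero_add, hBdef]
        linarith
    have hae : xd =ᵐ[volume.restrict (Set.Ioc 0 T)] g := by
      have hS0 : ∀ᵐ t ∂(volume : Measure ℝ), t ∉ S ∩ Set.Icc 0 T :=
        measure_eq_zero_iff_ae_notMem.1 ((hSfin T).measure_zero _)
      filter_upwards [ae_restrict_mem measurableSet_Ioc, ae_restrict_of_ae hS0] with t ht htB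
      have ht0 : 0 < t := ht.1
      have htS : t ∉ S := fun h => htB ⟨h, ht0.le, ht.2⟩
      rcases hstate t ht0.le with ⟨e1, e2⟩ | ⟨e1, e2⟩
      · have htV : t ∈ V := (hVmem t ht0 htS).2 e1
        rw [hgdef]
        simp only
        rw [Set.indicator_of_mem htV, Set.indicator_of_notMem (by simpa using htV), add_zero,
          hform t ht0.le htS, e1, e2, hg1def]
        ring
      · have htV : t ∉ V := by
          intro h
          exact absurd (((hVmem t ht0 htS).1 h).symm.trans e1) (ne_of_lt h12)
        rw [hgdef]
        simp only
        rw [Set.indicator_of_notMem htV, Set.indicator_of_mem (by simpa using htV), zero_add,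
          hform t ht0.le htS, e1, e2, hg2def]
        ring
    rw [intervalIntegrable_iff, Set.uIoc_of_le hT.le]
    exact hgInt.congr hae.symm
  -- fundamental theorem of calculus along the dynamics
  have hFTC : ∀ a b : ℝ, 0 ≤ a → a ≤ b → (∫ t in a..b, xd t) = x b - x a := by
    intro a b ha hab
    rcases eq_or_lt_of_le hab with rfl | hab'
    · simp
    · have hb : 0 < b := lt_of_le_of_lt ha hab'
      have hint : IntervalIntegrable xd volume a b := by
        refine (hInt b hb).mono_set ?_
        rw [Set.uIcc_of_le hab, Set.uIcc_of_le hb.le]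
        exact Set.Icc_subset_Icc ha le_rfl
      refine MeasureTheory.integral_eq_of_hasDerivAt_off_countable x xd
        (s := S ∩ Set.Ici 0) hScc ?_ ?_ hint
      · refine hx.mono ?_
        rw [Set.uIcc_of_le hab]
        exact fun t ht => le_trans ha ht.1
      · rintro t ⟨ht, htS⟩
        rw [min_eq_left hab, max_eq_right hab] at ht
        have ht0 : 0 ≤ t := le_trans ha ht.1.le
        exact hode t ht0 fun h => htS ⟨h, ht0⟩
  -- invariance: x stays in [vm1, vm2]
  have hub : ∀ T, 0 ≤ T → x T ≤ vm2 := by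
    intro T hT0
    by_contra hcon
    push_neg at hcon
    have hT0' : 0 < T := by
      rcases eq_or_lt_of_le hT0 with rfl | h
      · exact absurd hcon (not_lt.2 hx0.2)
      · exact h
    set A : Set ℝ := Set.Icc 0 T ∩ x ⁻¹' Set.Iic vm2 with hA
    have hAcl : IsClosed A :=
      (hx.mono Set.Icc_subset_Ici_self).preimage_isClosed_of_isClosed isClosed_Icc isClosed_Iic
    have hAne : A.Nonempty := ⟨0, ⟨le_rfl, hT0⟩, hx0.2⟩
    have hAbdd : BddAbove A := ⟨T, fun t ht => ht.1.2⟩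
    have hsA : sSup A ∈ A := hAcl.csSup_mem hAne hAbdd
    set s := sSup A with hs
    have hs0 : 0 ≤ s := hsA.1.1
    have hsT : s ≤ T := hsA.1.2
    have hsx : x s ≤ vm2 := hsA.2
    have hsltT : s < T :=
      lt_of_le_of_ne hsT fun h => absurd (h ▸ hsx) (not_le.2 hcon)
    have hgt : ∀ t, s < t → t ≤ T → vm2 < x t := by
      intro t hst htT
      by_contra hle
      push_neg at hle
      exact absurd (le_csSup hAbdd ⟨⟨le_trans hs0 hst.le, htT⟩, hle⟩) (not_le.2 hst)
    have hint : (∫ t in s..T, xd t) ≤ 0 := by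
      rw [← neg_nonneg, ← intervalIntegral.integral_neg]
      apply intervalIntegral.integral_nonneg_of_ae_restrict hsT
      have hS0 : ∀ᵐ t ∂(volume : Measure ℝ), t ∉ (S ∩ Set.Icc 0 T) ∪ {s} :=
        measure_eq_zero_iff_ae_notMem.1 (((hSfin T).union (Set.finite_singleton s)).measure_zero _)
      filter_upwards [ae_restrict_mem measurableSet_Icc, ae_restrict_of_ae hS0] with t ht htB
      have hts : t ≠ s := fun h => htB (Or.inr (by simp [h]))
      have hst : s < t := lt_of_le_of_ne ht.1 (Ne.symm hts)
      have ht0 : 0 ≤ t := le_trans hs0 ht.1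
      have htS : t ∉ S := fun h => htB (Or.inl ⟨h, ht0, ht.2⟩)
      have hxgt : vm2 < x t := hgt t hst ht.2
      have hvmle : vm t ≤ vm2 ∧ 0 < vM t - vm t := by
        rcases hstate t ht0 with ⟨e1, e2⟩ | ⟨e1, e2⟩
        · rw [e1, e2]; exact ⟨le_of_lt h12, hd1p⟩
        · rw [e1, e2]; exact ⟨le_rfl, hd2p⟩
      have hq : 0 ≤ (x t - vm t) / (vM t - vm t) :=
        le_of_lt (div_pos (by linarith [hvmle.1]) hvmle.2)
      simp only [Pi.zero_apply]
      rw [hform t ht0 htS, neg_mul, neg_neg]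
      exact mul_nonneg hc.le hq
    have hf := hFTC s T hs0 hsT
    rw [hf] at hint
    linarith
  have hlb : ∀ T, 0 ≤ T → vm1 ≤ x T := by
    intro T hT0
    by_contra hcon
    push_neg at hcon
    have hT0' : 0 < T := by
      rcases eq_or_lt_of_le hT0 with rfl | h
      · exact absurd hcon (not_lt.2 hx0.1)
      · exact h
    set A : Set ℝ := Set.Icc 0 T ∩ x ⁻¹' Set.Ici vm1 with hA
    have hAcl : IsClosed A :=
      (hx.mono Set.Icc_subset_Ici_self).preimage_isClosed_of_isClosed isClosed_Icc isClosed_Ici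
    have hAne : A.Nonempty := ⟨0, ⟨le_rfl, hT0⟩, hx0.1⟩
    have hAbdd : BddAbove A := ⟨T, fun t ht => ht.1.2⟩
    have hsA : sSup A ∈ A := hAcl.csSup_mem hAne hAbdd
    set s := sSup A with hs
    have hs0 : 0 ≤ s := hsA.1.1
    have hsT : s ≤ T := hsA.1.2
    have hsx : vm1 ≤ x s := hsA.2
    have hsltT : s < T :=
      lt_of_le_of_ne hsT fun h => absurd (h ▸ hsx) (not_le.2 hcon)
    have hgt : ∀ t, s < t → t ≤ T → x t < vm1 := by
      intro t hst htT
      by_contra hle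
      push_neg at hle
      exact absurd (le_csSup hAbdd ⟨⟨le_trans hs0 hst.le, htT⟩, hle⟩) (not_le.2 hst)
    have hint : (0:ℝ) ≤ ∫ t in s..T, xd t := by
      apply intervalIntegral.integral_nonneg_of_ae_restrict hsT
      have hS0 : ∀ᵐ t ∂(volume : Measure ℝ), t ∉ (S ∩ Set.Icc 0 T) ∪ {s} :=
        measure_eq_zero_iff_ae_notMem.1 (((hSfin T).union (Set.finite_singleton s)).measure_zero _)
      filter_upwards [ae_restrict_mem measurableSet_Icc, ae_restrict_of_ae hS0] with t ht htB
      have hts : t ≠ s := fun h => htB (Or.inr (by simp [h]))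
      have hst : s < t := lt_of_le_of_ne ht.1 (Ne.symm hts)
      have ht0 : 0 ≤ t := le_trans hs0 ht.1
      have htS : t ∉ S := fun h => htB (Or.inl ⟨h, ht0, ht.2⟩)
      have hxlt : x t < vm1 := hgt t hst ht.2
      have hvmle : vm1 ≤ vm t ∧ 0 < vM t - vm t := by
        rcases hstate t ht0 with ⟨e1, e2⟩ | ⟨e1, e2⟩
        · rw [e1, e2]; exact ⟨le_rfl, hd1p⟩
        · rw [e1, e2]; exact ⟨le_of_lt h12, hd2p⟩
      have hq : (x t - vm t) / (vM t - vm t) ≤ 0 :=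
        div_nonpos_of_nonpos_of_nonneg (by linarith [hvmle.1]) hvmle.2.le
      simp only [Pi.zero_apply]
      rw [hform t ht0 htS, neg_mul]
      simpa using mul_nonneg hc.le (neg_nonneg.2 hq)
    have hf := hFTC s T hs0 hsT
    rw [hf] at hint
    linarith
  -- the key exact identity
  have hkey : ∀ T : ℝ, 0 < T →
      (∫ t in (0:ℝ)..T, (vM t - vm t) * xd t)
        = 1 / 2 * ((vM2 - vm2) - (vM1 - vm1)) * (∫ t in (0:ℝ)..T, |xd t|)
          + 1 / 2 * ((vM1 - vm1) + (vM2 - vm2)) * (x T - x 0) := by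
    intro T hT
    have hint := hInt T hT
    have habs : IntervalIntegrable (fun t => |xd t|) volume 0 T := hint.abs
    have hcongr : (∫ t in (0:ℝ)..T, (vM t - vm t) * xd t)
        = ∫ t in (0:ℝ)..T, (1 / 2 * ((vM2 - vm2) - (vM1 - vm1)) * |xd t|
            + 1 / 2 * ((vM1 - vm1) + (vM2 - vm2)) * xd t) := by
      apply intervalIntegral.integral_congr_ae
      have hS0 : ∀ᵐ t ∂(volume : Measure ℝ), t ∉ S ∩ Set.Icc 0 T :=
        measure_eq_zero_iff_ae_notMem.1 ((hSfin T).measure_zero _)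
      filter_upwards [hS0] with t htB htmem
      rw [Set.uIoc_of_le hT.le] at htmem
      have ht0 : 0 < t := htmem.1
      have htS : t ∉ S := fun h => htB ⟨h, ht0.le, htmem.2⟩
      have hxl := hlb t ht0.le
      have hxu := hub t ht0.le
      rcases hstate t ht0.le with ⟨e1, e2⟩ | ⟨e1, e2⟩
      · have hq : 0 ≤ (x t - vm t) / (vM t - vm t) := by
          rw [e1, e2]
          exact div_nonneg (by linarith) hd1p.le
        have hxd : xd t ≤ 0 := by
          rw [hform t ht0.le htS, neg_mul]
          exact neg_nonpos.2 (mul_nonneg hc.le hq)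
        rw [abs_of_nonpos hxd, e1, e2]
        ring
      · have hq : (x t - vm t) / (vM t - vm t) ≤ 0 := by
          rw [e1, e2]
          exact div_nonpos_of_nonpos_of_nonneg (by linarith) hd2p.le
        have hxd : 0 ≤ xd t := by
          rw [hform t ht0.le htS, neg_mul]
          simpa using mul_nonneg hc.le (neg_nonneg.2 hq)
        rw [abs_of_nonneg hxd, e1, e2]
        ring
    rw [hcongr, intervalIntegral.integral_add (habs.const_mul _) (hint.const_mul _),
      intervalIntegral.integral_const_mul, intervalIntegral.integral_const_mul,
      hFTC 0 T le_rfl hT.le]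
  have hbd : ∀ T, 0 ≤ T → |x T - x 0| ≤ vm2 - vm1 := by
    intro T hT
    have h1 := hub T hT
    have h2 := hlb T hT
    rw [abs_le]
    constructor <;> [skip; skip] <;> first
      | (have := hx0.1; have := hx0.2; linarith)
  constructor
  · refine ⟨|1 / 2 * ((vM1 - vm1) + (vM2 - vm2))| * (vm2 - vm1), mul_nonneg (abs_nonneg _) (by linarith), ?_⟩
    intro T hT
    rw [hkey T hT]
    have heq : 1 / 2 * ((vM2 - vm2) - (vM1 - vm1)) * (∫ t in (0:ℝ)..T, |xd t|)
        + 1 / 2 * ((vM1 - vm1) + (vM2 - vm2)) * (x T - x 0)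
        - 1 / 2 * ((vM2 - vm2) - (vM1 - vm1)) * (∫ t in (0:ℝ)..T, |xd t|)
        = 1 / 2 * ((vM1 - vm1) + (vM2 - vm2)) * (x T - x 0) := by ring
    rw [heq, abs_mul]
    exact mul_le_mul_of_nonneg_left (hbd T hT.le) (abs_nonneg _)
  · intro L hL
    have hzero : Tendsto (fun T : ℝ => T⁻¹ * (x T - x 0)) atTop (nhds 0) := by
      apply tendsto_zero_iff_norm_tendsto_zero.2
      apply squeeze_zero' (Filter.Eventually.of_forall fun t => norm_nonneg _)
        (g := fun T => (vm2 - vm1) * T⁻¹) ?_ ?_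
      · filter_upwards [eventually_gt_atTop (0:ℝ)] with T hT
        rw [Real.norm_eq_abs, abs_mul, abs_inv, abs_of_pos hT, mul_comm]
        exact mul_le_mul_of_nonneg_right (hbd T hT.le) (inv_nonneg.2 hT.le)
      · simpa using tendsto_inv_atTop_zero.const_mul (vm2 - vm1)
    have hmain : Tendsto (fun T : ℝ => T⁻¹ * ∫ t in (0:ℝ)..T, (vM t - vm t) * xd t) atTop
        (nhds (1 / 2 * ((vM2 - vm2) - (vM1 - vm1)) * L)) := by
      have haux := (hL.const_mul (1 / 2 * ((vM2 - vm2) - (vM1 - vm1)))).add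
        (hzero.const_mul (1 / 2 * ((vM1 - vm1) + (vM2 - vm2))))
      rw [mul_zero, add_zero] at haux
      refine haux.congr' ?_
      filter_upwards [eventually_gt_atTop (0:ℝ)] with T hT
      rw [hkey T hT]
      ring
    refine ⟨hmain, ?_⟩
    have heq2 : (fun T : ℝ => T⁻¹ * ∫ t in (0:ℝ)..T, ((n:ℝ) - 1) / (n:ℝ) * ((vM t - vm t) * xd t))
        = fun T : ℝ => ((n:ℝ) - 1) / (n:ℝ) * (T⁻¹ * ∫ t in (0:ℝ)..T, (vM t - vm t) * xd t) := by
      funext T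
      rw [intervalIntegral.integral_const_mul]
      ring
    rw [heq2]
    exact hmain.const_mul _
end
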